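/- arXiv:1403.3783 — 2 statements merged into one kernel-verified Lean document; each statement's English description precedes it below -/
import Mathlib

section
/- Let 𝓜 be a quadratic module in M_n(ℝ[X]). Then the following are equivalent: (1) 𝓜 is Archimedean; (2) there exists a real number r > 0 such that (r − Σ_{i=1}^d x_i²)·I_n ∈ 𝓜; (3) there exists a real number r > 0 such that (r + x_i)·I_n ∈ 𝓜 and (r − x_i)·I_n ∈ 𝓜 for every i = 1,…,d. -/
open Matrix
noncomputable section

/-- The polynomial ring `ℝ[x_1, …, x_d]`. -/
abbrev RX (d : ℕ) : Type := MvPolynomial (Fin d) ℝ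

/-- The basic closed semialgebraic set `K_G` attached to a set `G` of polynomials. -/
def KsetP {d : ℕ} (G : Set (RX d)) : Set (Fin d → ℝ) :=
  {x | ∀ g ∈ G, 0 ≤ MvPolynomial.eval x g}

/-- Evaluation of a polynomial matrix at a point of `ℝ^d`. -/
def evalMat {d n : ℕ} (x : Fin d → ℝ) (A : Matrix (Fin n) (Fin n) (RX d)) :
    Matrix (Fin n) (Fin n) ℝ :=
  A.map (MvPolynomial.eval x)

/-- The set `K_𝒢` attached to a set `𝒢` of symmetric polynomial matrices. -/
def KsetM {d n : ℕ} (𝒢 : Set (Matrix (Fin n) (Fin n) (RX d))) : Set (Fin d → ℝ) :=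
  {x | ∀ A ∈ 𝒢, (evalMat x A).PosSemidef}

/-- Membership in the preordering of a commutative ring generated by a subset `G`:
the smallest subset containing `G` and all squares and closed under addition and
multiplication.  For `G = {g_1, …, g_m}` this is exactly the set of all finite sums
`Σ_{e ∈ {0,1}^m} σ_e g_1^{e_1} ⋯ g_m^{e_m}` with each `σ_e` a sum of squares. -/
inductive IsInPreordering {R : Type} [CommRing R] (G : Set R) : R → Prop
  | sq (a : R) : IsInPreordering G (a ^ 2)
  | gen {g : R} : g ∈ G → IsInPreordering G g
  | add {a b : R} : IsInPreordering G a → IsInPreordering G b → IsInPreordering G (a + b)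
  | mul {a b : R} : IsInPreordering G a → IsInPreordering G b → IsInPreordering G (a * b)

/-- Membership in the quadratic module of a commutative ring generated by a subset `G`:
for `G = {g_1, …, g_m}` this is exactly the set of all sums
`σ_0 + σ_1 g_1 + ⋯ + σ_m g_m` with each `σ_i` a sum of squares. -/
inductive IsInQuadModuleGen {R : Type} [CommRing R] (G : Set R) : R → Prop
  | one : IsInQuadModuleGen G 1
  | gen {g : R} : g ∈ G → IsInQuadModuleGen G g
  | add {a b : R} : IsInQuadModuleGen G a → IsInQuadModuleGen G b → IsInQuadModuleGen G (a + b)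
  | mul_sq (f : R) {a : R} : IsInQuadModuleGen G a → IsInQuadModuleGen G (f ^ 2 * a)

/-- For a quadratic module `M ⊆ R`, the quadratic module
`M^n = {Σ_i m_i A_iᵀ A_i : m_i ∈ M, A_i ∈ M_n(R)}` of `n × n` matrices. -/
def MatQM {R : Type} [CommRing R] (n : ℕ) (M : Set R) : Set (Matrix (Fin n) (Fin n) R) :=
  {B | ∃ (k : ℕ) (m : Fin k → R) (A : Fin k → Matrix (Fin n) (Fin n) R),
    (∀ i, m i ∈ M) ∧ B = ∑ i, m i • ((A i)ᵀ * A i)}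

/-- A quadratic module in `M_n(R)`: a subset of the symmetric matrices containing `I_n`,
closed under addition and under congruence `B ↦ Aᵀ B A`. -/
def IsMatQuadModule {R : Type} [CommRing R] {n : ℕ}
    (𝓜 : Set (Matrix (Fin n) (Fin n) R)) : Prop :=
  (∀ B ∈ 𝓜, B.IsSymm) ∧ (1 : Matrix (Fin n) (Fin n) R) ∈ 𝓜 ∧
    (∀ A ∈ 𝓜, ∀ B ∈ 𝓜, A + B ∈ 𝓜) ∧
    (∀ (A : Matrix (Fin n) (Fin n) R), ∀ B ∈ 𝓜, Aᵀ * B * A ∈ 𝓜)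

/-- Membership in the quadratic module `𝓜_𝒢` of `M_n(R)` generated by a set `𝒢` of
symmetric matrices. -/
inductive InMatQM {R : Type} [CommRing R] {n : ℕ}
    (𝒢 : Set (Matrix (Fin n) (Fin n) R)) : Matrix (Fin n) (Fin n) R → Prop
  | one : InMatQM 𝒢 1
  | gen {B : Matrix (Fin n) (Fin n) R} : B ∈ 𝒢 → InMatQM 𝒢 B
  | add {A B : Matrix (Fin n) (Fin n) R} : InMatQM 𝒢 A → InMatQM 𝒢 B → InMatQM 𝒢 (A + B)
  | conj (A : Matrix (Fin n) (Fin n) R) {B : Matrix (Fin n) (Fin n) R} :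
      InMatQM 𝒢 B → InMatQM 𝒢 (Aᵀ * B * A)

/-- Membership in the preordering `𝒯_𝒢` of `M_n(R)` generated by a set `𝒢` of symmetric
matrices: the smallest quadratic module of `M_n(R)` containing `𝒢` whose intersection with
`R · I_n` is closed under multiplication. -/
inductive InMatPre {R : Type} [CommRing R] {n : ℕ}
    (𝒢 : Set (Matrix (Fin n) (Fin n) R)) : Matrix (Fin n) (Fin n) R → Prop
  | one : InMatPre 𝒢 1
  | gen {B : Matrix (Fin n) (Fin n) R} : B ∈ 𝒢 → InMatPre 𝒢 B
  | add {A B : Matrix (Fin n) (Fin n) R} : InMatPre 𝒢 A → InMatPre 𝒢 B → InMatPre 𝒢 (A + B)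
  | conj (A : Matrix (Fin n) (Fin n) R) {B : Matrix (Fin n) (Fin n) R} :
      InMatPre 𝒢 B → InMatPre 𝒢 (Aᵀ * B * A)
  | smul_mul {p q : R} : InMatPre 𝒢 (p • (1 : Matrix (Fin n) (Fin n) R)) →
      InMatPre 𝒢 (q • (1 : Matrix (Fin n) (Fin n) R)) →
      InMatPre 𝒢 ((p * q) • (1 : Matrix (Fin n) (Fin n) R))

/-- A quadratic module `𝓜` of `M_n(R)` is Archimedean if for every `A ∈ M_n(R)` there is
`k ∈ ℕ` with `k·I_n − Aᵀ A ∈ 𝓜`. -/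
def MatArch {R : Type} [CommRing R] {n : ℕ} (𝓜 : Set (Matrix (Fin n) (Fin n) R)) : Prop :=
  ∀ A : Matrix (Fin n) (Fin n) R, ∃ k : ℕ,
    (k : R) • (1 : Matrix (Fin n) (Fin n) R) - Aᵀ * A ∈ 𝓜

/-- A quadratic module `M` of `R` (`1 ∈ M`, `M + M ⊆ M`, `f² M ⊆ M`). -/
def IsQuadModule {R : Type} [CommRing R] (M : Set R) : Prop :=
  (1 : R) ∈ M ∧ (∀ a ∈ M, ∀ b ∈ M, a + b ∈ M) ∧ ∀ (f : R), ∀ a ∈ M, f ^ 2 * a ∈ M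

/-- A quadratic module `M` of `R` is Archimedean if for every `f ∈ R` there is `k ∈ ℕ`
with `k − f² ∈ M`. -/
def ScalarArch {R : Type} [CommRing R] (M : Set R) : Prop :=
  ∀ f : R, ∃ k : ℕ, (k : R) - f ^ 2 ∈ M

/-- The set `R_∞(f, S)` of asymptotic values of `f` on `S`. -/
def AsympVals {d : ℕ} (f : RX d) (S : Set (Fin d → ℝ)) : Set ℝ :=
  {y | ∃ u : ℕ → (Fin d → ℝ), (∀ k, u k ∈ S) ∧
    Filter.Tendsto (fun k => ‖u k‖) Filter.atTop Filter.atTop ∧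
    Filter.Tendsto (fun k => MvPolynomial.eval (u k) f) Filter.atTop (nhds y)}

/-- The scalar polynomial `xᵀ F x` attached to a vector `x ∈ ℝ^n` and a polynomial
matrix `F`. -/
def quadForm {d n : ℕ} (v : Fin n → ℝ) (F : Matrix (Fin n) (Fin n) (RX d)) : RX d :=
  ∑ i, ∑ j, MvPolynomial.C (v i * v j) * F i j

/-- The canonical map from `ℝ[x_1, …, x_d]` to the completion
`ℝ[[x_1 − p_1, …, x_d − p_d]]` at a point `p`, i.e. Taylor expansion at `p`,
sending `x_i` to `p_i + X_i`. -/
def toCompletion {d : ℕ} (p : Fin d → ℝ) (f : RX d) : MvPowerSeries (Fin d) ℝ :=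
  MvPolynomial.eval₂ (MvPowerSeries.C : ℝ →+* MvPowerSeries (Fin d) ℝ)
    (fun i => (MvPowerSeries.C : ℝ →+* MvPowerSeries (Fin d) ℝ) (p i) + MvPowerSeries.X i) f

/-- The Hessian matrix `D²f(p)` of a polynomial `f` at a point `p`. -/
def Hess {d : ℕ} (f : RX d) (p : Fin d → ℝ) : Matrix (Fin d) (Fin d) ℝ :=
  Matrix.of fun i j => MvPolynomial.eval p (MvPolynomial.pderiv i (MvPolynomial.pderiv j f))

/-- `t_1, …, t_d` is a system of uniformizing parameters at `p`: each `t_i` vanishes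
at `p` and their differentials at `p` are linearly independent. -/
def IsUniformizing {d : ℕ} (p : Fin d → ℝ) (t : Fin d → RX d) : Prop :=
  (∀ i, MvPolynomial.eval p (t i) = 0) ∧
    (Matrix.of fun i j => MvPolynomial.eval p (MvPolynomial.pderiv j (t i))).det ≠ 0

/-- `f` satisfies the boundary Hessian conditions at `p` with respect to
`t_1, …, t_k`, part of a system of uniformizing parameters `t_1, …, t_d` at `p`:
in the completion at `p`, `f = f_0 + f_1 + f_2 + ⋯` with `f_j` homogeneous of degree
`j` in `t_1, …, t_d`, `f_1 = a_1 t_1 + ⋯ + a_k t_k` with all `a_i > 0`, and the quadratic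
form `f_2(0, …, 0, t_{k+1}, …, t_d)` is positive definite. -/
def SatisfiesBHC {d : ℕ} (p : Fin d → ℝ) (t : Fin d → RX d) (k : ℕ) (f : RX d) : Prop :=
  ∃ (a : Fin d → ℝ) (c : Matrix (Fin d) (Fin d) ℝ),
    (∀ i : Fin d, (i : ℕ) < k → 0 < a i) ∧ (∀ i : Fin d, k ≤ (i : ℕ) → a i = 0) ∧
    (∀ v : Fin d → ℝ, v ≠ 0 → (∀ i : Fin d, (i : ℕ) < k → v i = 0) →
      0 < ∑ i, ∑ j, c i j * v i * v j) ∧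
    toCompletion p (f - MvPolynomial.C (MvPolynomial.eval p f)
        - ∑ i, MvPolynomial.C (a i) * t i
        - ∑ i, ∑ j, MvPolynomial.C (c i j) * (t i * t j))
      ∈ (Ideal.span (Set.range fun i => toCompletion p (t i))) ^ 3

section auxQM
open MvPolynomial

variable {d n : ℕ} {𝓜 : Set (Matrix (Fin n) (Fin n) (RX d))} (h𝓜 : IsMatQuadModule 𝓜)
include h𝓜

lemma qm_sq_smul (f : RX d) {B} (hB : B ∈ 𝓜) : f ^ 2 • B ∈ 𝓜 := by
  have h := h𝓜.2.2.2 (f • 1) B hB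
  simpa [Matrix.transpose_smul, smul_mul_assoc, mul_smul_comm, smul_smul, ← sq] using h

lemma qm_zero : (0 : Matrix (Fin n) (Fin n) (RX d)) ∈ 𝓜 := by
  have h := h𝓜.2.2.2 0 1 h𝓜.2.1
  simpa using h

lemma qm_sum {ι : Type*} (s : Finset ι) (f : ι → Matrix (Fin n) (Fin n) (RX d))
    (hf : ∀ i ∈ s, f i ∈ 𝓜) : ∑ i ∈ s, f i ∈ 𝓜 := by
  classical
  induction s using Finset.induction with
  | empty => simpa using qm_zero h𝓜
  | @insert x s hx ih =>
    rw [Finset.sum_insert hx]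
    exact h𝓜.2.2.1 _ (hf _ (Finset.mem_insert_self _ _)) _
      (ih fun i hi => hf i (Finset.mem_insert_of_mem hi))

/-- scalar quadratic module membership -/
def M0 (𝓜 : Set (Matrix (Fin n) (Fin n) (RX d))) : Set (RX d) :=
  {f | f • (1 : Matrix (Fin n) (Fin n) (RX d)) ∈ 𝓜}

lemma m0_one : (1 : RX d) ∈ M0 𝓜 := by simpa [M0] using h𝓜.2.1
lemma m0_zero : (0 : RX d) ∈ M0 𝓜 := by simpa [M0] using qm_zero h𝓜
lemma m0_add {a b : RX d} (ha : a ∈ M0 𝓜) (hb : b ∈ M0 𝓜) : a + b ∈ M0 𝓜 := by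
  have := h𝓜.2.2.1 _ ha _ hb
  simpa [M0, add_smul] using this
lemma m0_sq_mul (f : RX d) {a : RX d} (ha : a ∈ M0 𝓜) : f ^ 2 * a ∈ M0 𝓜 := by
  have := qm_sq_smul h𝓜 f ha
  have e : (f ^ 2 * a) • (1 : Matrix (Fin n) (Fin n) (RX d)) = f ^ 2 • (a • 1) := by
    rw [smul_smul]
  simpa [M0, e] using this
lemma m0_const {c : ℝ} (hc : 0 ≤ c) : (C c : RX d) ∈ M0 𝓜 := by
  have : (C c : RX d) = (C (Real.sqrt c)) ^ 2 * 1 := by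
    rw [mul_one, ← map_pow, Real.sq_sqrt hc]
  rw [this]
  exact m0_sq_mul h𝓜 _ (m0_one h𝓜)
lemma m0_const_mul {c : ℝ} (hc : 0 ≤ c) {a : RX d} (ha : a ∈ M0 𝓜) :
    (C c : RX d) * a ∈ M0 𝓜 := by
  have : (C c : RX d) * a = (C (Real.sqrt c)) ^ 2 * a := by
    rw [← map_pow, Real.sq_sqrt hc]
  rw [this]; exact m0_sq_mul h𝓜 _ ha
lemma m0_sum {ι : Type*} (s : Finset ι) (f : ι → RX d)
    (hf : ∀ i ∈ s, f i ∈ M0 𝓜) : ∑ i ∈ s, f i ∈ M0 𝓜 := by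
  have := qm_sum h𝓜 s (fun i => f i • 1) (fun i hi => hf i hi)
  simpa [M0, Finset.sum_smul] using this
lemma m0_sq (f : RX d) : f ^ 2 ∈ M0 𝓜 := by
  simpa using m0_sq_mul h𝓜 f (m0_one h𝓜)
lemma m0_prod_trick {p q : RX d} (hp : p ∈ M0 𝓜) (hq : q ∈ M0 𝓜) :
    p * q * (p + q) ∈ M0 𝓜 := by
  have : p * q * (p + q) = p ^ 2 * q + q ^ 2 * p := by ring
  rw [this]
  exact m0_add h𝓜 (m0_sq_mul h𝓜 _ hq) (m0_sq_mul h𝓜 _ hp)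


lemma m0_two_to_three {r : ℝ} (hr : 0 < r)
    (h : (C r - ∑ i : Fin d, X i ^ 2 : RX d) ∈ M0 𝓜) (i : Fin d) :
    (C (r + 4⁻¹) + X i : RX d) ∈ M0 𝓜 ∧ (C (r + 4⁻¹) - X i : RX d) ∈ M0 𝓜 := by
  have h1 : (C (r + 4⁻¹) : RX d) = C r + C 4⁻¹ := map_add _ _ _
  have h2 : ((C (2⁻¹ : ℝ) : RX d)) ^ 2 = C 4⁻¹ := by
    rw [← map_pow]; norm_num
  have h3 : (C (2⁻¹ : ℝ) : RX d) * 2 = 1 := by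
    rw [← map_ofNat (C : ℝ →+* RX d) 2, ← _root_.map_mul]
    norm_num
  have hsum : ∑ j ∈ Finset.univ.erase i, (X j : RX d) ^ 2 + X i ^ 2
      = ∑ j : Fin d, X j ^ 2 := Finset.sum_erase_add _ _ (Finset.mem_univ i)
  have hS : (∑ j ∈ Finset.univ.erase i, (X j : RX d) ^ 2) ∈ M0 𝓜 :=
    m0_sum h𝓜 _ _ fun j _ => m0_sq h𝓜 _
  constructor
  · have key : (C (r + 4⁻¹) + X i : RX d)
        = (C r - ∑ j : Fin d, X j ^ 2) + (X i + C 2⁻¹) ^ 2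
          + ∑ j ∈ Finset.univ.erase i, X j ^ 2 := by
      rw [← hsum]; linear_combination h1 - h2 - X i * h3
    rw [key]
    exact m0_add h𝓜 (m0_add h𝓜 h (m0_sq h𝓜 _)) hS
  · have key : (C (r + 4⁻¹) - X i : RX d)
        = (C r - ∑ j : Fin d, X j ^ 2) + (X i - C 2⁻¹) ^ 2
          + ∑ j ∈ Finset.univ.erase i, X j ^ 2 := by
      rw [← hsum]; linear_combination h1 - h2 + X i * h3
    rw [key]
    exact m0_add h𝓜 (m0_add h𝓜 h (m0_sq h𝓜 _)) hS

lemma m0_three_to_two {r : ℝ} (hr : 0 < r)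
    (h : ∀ i : Fin d, (C r + X i : RX d) ∈ M0 𝓜 ∧ (C r - X i : RX d) ∈ M0 𝓜) :
    (C ((d : ℝ) * r ^ 2 + 1) - ∑ i : Fin d, X i ^ 2 : RX d) ∈ M0 𝓜 := by
  have step : ∀ i : Fin d, (C (r ^ 2) - X i ^ 2 : RX d) ∈ M0 𝓜 := by
    intro i
    have hp := m0_prod_trick h𝓜 (h i).1 (h i).2
    have e : (C r + X i : RX d) * (C r - X i) * ((C r + X i) + (C r - X i))
        = C (2 * r) * (C (r ^ 2) - X i ^ 2) := by
      rw [_root_.map_mul, map_ofNat, map_pow]; ring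
    rw [e] at hp
    have hp2 := m0_const_mul h𝓜 (c := (2 * r)⁻¹) (by positivity) hp
    have e2 : (C ((2 * r)⁻¹ : ℝ) : RX d) * (C (2 * r) * (C (r ^ 2) - X i ^ 2))
        = C (r ^ 2) - X i ^ 2 := by
      rw [← mul_assoc, ← _root_.map_mul, inv_mul_cancel₀ (by positivity), _root_.map_one, one_mul]
    rwa [e2] at hp2
  have key : (C ((d : ℝ) * r ^ 2 + 1) - ∑ i : Fin d, X i ^ 2 : RX d)
      = (∑ i : Fin d, (C (r ^ 2) - X i ^ 2)) + 1 := by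
    rw [Finset.sum_sub_distrib, Finset.sum_const, Finset.card_univ, Fintype.card_fin,
      nsmul_eq_mul, _root_.map_add, _root_.map_one, _root_.map_mul, map_natCast]
    ring
  rw [key]
  exact m0_add h𝓜 (m0_sum h𝓜 _ _ fun i _ => step i) (m0_one h𝓜)

/-- boundedness -/
def Bd (𝓜 : Set (Matrix (Fin n) (Fin n) (RX d))) : Set (RX d) :=
  {f | ∃ k : ℕ, ((k : RX d) + f) ∈ M0 𝓜 ∧ ((k : RX d) - f) ∈ M0 𝓜}

omit h𝓜 in
lemma natCast_eq_C (k : ℕ) : ((k : RX d)) = C ((k : ℝ)) := by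
  simp

lemma bd_of_bounds {f : RX d} {c : ℝ} (hc1 : (C c + f : RX d) ∈ M0 𝓜)
    (hc2 : (C c - f : RX d) ∈ M0 𝓜) : f ∈ Bd 𝓜 := by
  refine ⟨⌈|c|⌉₊, ?_, ?_⟩
  · have : ((⌈|c|⌉₊ : RX d) + f) = C ((⌈|c|⌉₊ : ℝ) - c) + (C c + f) := by
      rw [natCast_eq_C, map_sub]; ring
    rw [this]
    refine m0_add h𝓜 (m0_const h𝓜 ?_) hc1
    have := Nat.le_ceil |c|
    have := neg_abs_le c
    have := le_abs_self c
    linarith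
  · have : ((⌈|c|⌉₊ : RX d) - f) = C ((⌈|c|⌉₊ : ℝ) - c) + (C c - f) := by
      rw [natCast_eq_C, map_sub]; ring
    rw [this]
    refine m0_add h𝓜 (m0_const h𝓜 ?_) hc2
    have := Nat.le_ceil |c|
    have := le_abs_self c
    linarith

lemma bd_const (c : ℝ) : (C c : RX d) ∈ Bd 𝓜 := by
  refine bd_of_bounds h𝓜 (c := |c|) ?_ ?_
  · have : (C |c| + C c : RX d) = C (|c| + c) := (map_add _ _ _).symm
    rw [this]; exact m0_const h𝓜 (by have := neg_abs_le c; linarith)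
  · have : (C |c| - C c : RX d) = C (|c| - c) := (map_sub _ _ _).symm
    rw [this]; exact m0_const h𝓜 (by have := le_abs_self c; linarith)

omit h𝓜 in
lemma bd_neg {f : RX d} (hf : f ∈ Bd 𝓜) : -f ∈ Bd 𝓜 := by
  obtain ⟨k, h1, h2⟩ := hf
  exact ⟨k, by simpa [sub_eq_add_neg] using h2, by simpa [sub_eq_add_neg] using h1⟩

lemma bd_add {f g : RX d} (hf : f ∈ Bd 𝓜) (hg : g ∈ Bd 𝓜) : f + g ∈ Bd 𝓜 := by
  obtain ⟨k, h1, h2⟩ := hf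
  obtain ⟨l, h3, h4⟩ := hg
  refine ⟨k + l, ?_, ?_⟩
  · have : (((k + l : ℕ) : RX d) + (f + g)) = ((k : RX d) + f) + ((l : RX d) + g) := by
      push_cast; ring
    rw [this]; exact m0_add h𝓜 h1 h3
  · have : (((k + l : ℕ) : RX d) - (f + g)) = ((k : RX d) - f) + ((l : RX d) - g) := by
      push_cast; ring
    rw [this]; exact m0_add h𝓜 h2 h4

lemma bd_sq {f : RX d} (hf : f ∈ Bd 𝓜) : f ^ 2 ∈ Bd 𝓜 := by
  obtain ⟨k, h1, h2⟩ := hf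
  set K : ℕ := k + 1 with hK
  have hK1 : ((K : RX d) + f) ∈ M0 𝓜 := by
    have : ((K : RX d) + f) = ((k : RX d) + f) + 1 := by rw [hK]; push_cast; ring
    rw [this]; exact m0_add h𝓜 h1 (m0_one h𝓜)
  have hK2 : ((K : RX d) - f) ∈ M0 𝓜 := by
    have : ((K : RX d) - f) = ((k : RX d) - f) + 1 := by rw [hK]; push_cast; ring
    rw [this]; exact m0_add h𝓜 h2 (m0_one h𝓜)
  have hKpos : (0 : ℝ) < (K : ℝ) := by rw [hK]; push_cast; positivity
  have hp := m0_prod_trick h𝓜 hK1 hK2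
  have e : ((K : RX d) + f) * ((K : RX d) - f) * (((K : RX d) + f) + ((K : RX d) - f))
      = C (2 * (K : ℝ)) * (C ((K : ℝ) ^ 2) - f ^ 2) := by
    rw [natCast_eq_C, _root_.map_mul, map_ofNat, map_pow]; ring
  rw [e] at hp
  have hp2 := m0_const_mul h𝓜 (c := (2 * (K : ℝ))⁻¹) (by positivity) hp
  have e2 : (C ((2 * (K : ℝ))⁻¹ : ℝ) : RX d) * (C (2 * (K : ℝ)) * (C ((K : ℝ) ^ 2) - f ^ 2))
      = C ((K : ℝ) ^ 2) - f ^ 2 := by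
    rw [← mul_assoc, ← _root_.map_mul, inv_mul_cancel₀ (by positivity), _root_.map_one, one_mul]
  rw [e2] at hp2
  refine bd_of_bounds h𝓜 (c := (K : ℝ) ^ 2) ?_ hp2
  exact m0_add h𝓜 (m0_const h𝓜 (by positivity)) (m0_sq h𝓜 f)

lemma bd_constmul_nonneg {c : ℝ} (hc : 0 ≤ c) {f : RX d} (hf : f ∈ Bd 𝓜) :
    C c * f ∈ Bd 𝓜 := by
  obtain ⟨k, h1, h2⟩ := hf
  refine bd_of_bounds h𝓜 (c := c * k) ?_ ?_
  · have : (C (c * (k : ℝ)) + C c * f : RX d) = C c * ((k : RX d) + f) := by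
      rw [natCast_eq_C, _root_.map_mul]; ring
    rw [this]; exact m0_const_mul h𝓜 hc h1
  · have : (C (c * (k : ℝ)) - C c * f : RX d) = C c * ((k : RX d) - f) := by
      rw [natCast_eq_C, _root_.map_mul]; ring
    rw [this]; exact m0_const_mul h𝓜 hc h2

lemma bd_constmul (c : ℝ) {f : RX d} (hf : f ∈ Bd 𝓜) : C c * f ∈ Bd 𝓜 := by
  rcases le_or_gt 0 c with hc | hc
  · exact bd_constmul_nonneg h𝓜 hc hf
  · have h' := bd_constmul_nonneg h𝓜 (c := -c) (by linarith) (bd_neg hf)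
    have e : (C (-c) : RX d) * -f = C c * f := by rw [map_neg]; ring
    rwa [e] at h'

lemma bd_mul {f g : RX d} (hf : f ∈ Bd 𝓜) (hg : g ∈ Bd 𝓜) : f * g ∈ Bd 𝓜 := by
  have key : f * g = C (4⁻¹ : ℝ) * (f + g) ^ 2 + -(C (4⁻¹ : ℝ) * (f + -g) ^ 2) := by
    have h4 : (C (4⁻¹ : ℝ) : RX d) * 4 = 1 := by
      rw [← map_ofNat (C : ℝ →+* RX d) 4, ← _root_.map_mul]
      norm_num
    linear_combination (-(f * g)) * h4
  rw [key]
  exact bd_add h𝓜 (bd_constmul h𝓜 _ (bd_sq h𝓜 (bd_add h𝓜 hf hg)))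
    (bd_neg (bd_constmul h𝓜 _ (bd_sq h𝓜 (bd_add h𝓜 hf (bd_neg hg)))))

lemma bd_all
    (hX : ∀ i : Fin d, (X i : RX d) ∈ Bd 𝓜) (f : RX d) : f ∈ Bd 𝓜 := by
  induction f using MvPolynomial.induction_on with
  | C c => exact bd_const h𝓜 c
  | add p q hp hq => exact bd_add h𝓜 hp hq
  | mul_X p i hp => exact bd_mul h𝓜 hp (hX i)


lemma bd_X {r : ℝ} (hr : 0 < r)
    (h : ∀ i : Fin d, (C r + X i : RX d) ∈ M0 𝓜 ∧ (C r - X i : RX d) ∈ M0 𝓜)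
    (i : Fin d) : (X i : RX d) ∈ Bd 𝓜 :=
  bd_of_bounds h𝓜 (h i).1 (h i).2

lemma qm_const_smul {c : ℝ} (hc : 0 ≤ c) {B} (hB : B ∈ 𝓜) :
    (C c : RX d) • B ∈ 𝓜 := by
  have h := qm_sq_smul h𝓜 (C (Real.sqrt c)) hB
  rwa [← map_pow, Real.sq_sqrt hc] at h

omit h𝓜 in
lemma delta_sum (a b : Fin n) :
    (∑ l : Fin n, (if a = l then (1 : RX d) else 0) * (if b = l then 1 else 0))
      = (if a = b then 1 else 0) := by
  simp [ite_mul, one_mul, zero_mul, Finset.sum_ite_eq, eq_comm]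

omit h𝓜 in
lemma delta_collapse (g : Fin n → RX d) (c : Fin n) :
    (∑ l : Fin n, g l * (if c = l then 1 else 0)) = g c := by
  simp [mul_ite, mul_one, mul_zero, Finset.sum_ite_eq]

omit h𝓜 in
lemma delta_calc (w : Fin n → RX d) (a b : Fin n) :
    (∑ j : Fin n, ∑ l : Fin n,
      ((w j * (if a = l then 1 else 0) - w l * (if a = j then 1 else 0)) *
       (w j * (if b = l then 1 else 0) - w l * (if b = j then 1 else 0))))
    = 2 * (∑ j : Fin n, w j ^ 2) * (if a = b then 1 else 0) - 2 * (w a * w b) := by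
  have step : ∀ j : Fin n, (∑ l : Fin n,
      ((w j * (if a = l then 1 else 0) - w l * (if a = j then 1 else 0)) *
       (w j * (if b = l then 1 else 0) - w l * (if b = j then 1 else 0))))
      = w j ^ 2 * (if a = b then 1 else 0)
        - w a * (w j * (if b = j then 1 else 0))
        - w b * (w j * (if a = j then 1 else 0))
        + (∑ l : Fin n, w l ^ 2) * ((if a = j then 1 else 0) * (if b = j then 1 else 0)) := by
    intro j
    have expand : ∀ l : Fin n,
        (w j * (if a = l then 1 else 0) - w l * (if a = j then 1 else 0)) *
        (w j * (if b = l then 1 else 0) - w l * (if b = j then 1 else 0))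
        = w j ^ 2 * ((if a = l then (1:RX d) else 0) * (if b = l then 1 else 0))
          - (w j * (if b = j then 1 else 0)) * (w l * (if a = l then 1 else 0))
          - (w j * (if a = j then 1 else 0)) * (w l * (if b = l then 1 else 0))
          + w l ^ 2 * ((if a = j then 1 else 0) * (if b = j then 1 else 0)) := by
      intro l; ring
    rw [Finset.sum_congr rfl fun l _ => expand l, Finset.sum_add_distrib,
      Finset.sum_sub_distrib, Finset.sum_sub_distrib, ← Finset.mul_sum, ← Finset.mul_sum,
      ← Finset.mul_sum, ← Finset.sum_mul, delta_sum, delta_collapse, delta_collapse]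
    ring
  rw [Finset.sum_congr rfl fun j _ => step j, Finset.sum_add_distrib,
    Finset.sum_sub_distrib, Finset.sum_sub_distrib, ← Finset.sum_mul,
    ← Finset.mul_sum, ← Finset.mul_sum, ← Finset.mul_sum, delta_sum,
    delta_collapse w b, delta_collapse w a]
  ring

lemma arch_of_bd (hn : 0 < n) (hall : ∀ f : RX d, f ∈ Bd 𝓜) : MatArch 𝓜 := by
  intro A
  classical
  set f : RX d := ∑ i : Fin n, ∑ j : Fin n, A i j ^ 2 with hf
  obtain ⟨k, hk1, hk2⟩ := hall f
  refine ⟨k, ?_⟩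
  suffices hkey : f • (1 : Matrix (Fin n) (Fin n) (RX d)) - Aᵀ * A ∈ 𝓜 by
    have e : (k : RX d) • (1 : Matrix (Fin n) (Fin n) (RX d)) - Aᵀ * A
        = ((k : RX d) - f) • 1 + (f • 1 - Aᵀ * A) := by
      rw [sub_smul]; abel
    rw [e]
    exact h𝓜.2.2.1 _ hk2 _ hkey
  set i0 : Fin n := ⟨0, hn⟩
  set v : Fin n → Fin n → Fin n → Fin n → RX d := fun i j l b =>
    A i j * (if b = l then 1 else 0) - A i l * (if b = j then 1 else 0) with hv
  set B : Fin n → Fin n → Fin n → Matrix (Fin n) (Fin n) (RX d) := fun i j l =>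
    Matrix.of fun a b => if a = i0 then v i j l b else 0 with hB
  have hBB : ∀ i j l, (B i j l)ᵀ * (B i j l)
      = Matrix.of fun a b => v i j l a * v i j l b := by
    intro i j l
    refine Matrix.ext fun a b => ?_
    simp [hB, Matrix.mul_apply, Matrix.transpose_apply, ite_mul, mul_ite,
      Finset.sum_ite_eq']
  have hbig : (∑ i : Fin n, ∑ j : Fin n, ∑ l : Fin n, (B i j l)ᵀ * (B i j l)) ∈ 𝓜 := by
    refine qm_sum h𝓜 _ _ fun i _ => qm_sum h𝓜 _ _ fun j _ => qm_sum h𝓜 _ _ fun l _ => ?_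
    have h := h𝓜.2.2.2 (B i j l) 1 h𝓜.2.1
    rwa [mul_one] at h
  have hkey2 : (∑ i : Fin n, ∑ j : Fin n, ∑ l : Fin n, (B i j l)ᵀ * (B i j l))
      = ((2 : RX d) * f) • (1 : Matrix (Fin n) (Fin n) (RX d)) - (2 : RX d) • (Aᵀ * A) := by
    refine Matrix.ext fun a b => ?_
    simp only [Matrix.sum_apply, hBB, Matrix.of_apply, hv, Matrix.sub_apply,
      Matrix.smul_apply, Matrix.one_apply, Matrix.mul_apply, Matrix.transpose_apply,
      smul_eq_mul]
    rw [Finset.sum_congr rfl fun i _ => delta_calc (fun j => A i j) a b,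
      Finset.sum_sub_distrib, ← Finset.sum_mul, ← Finset.mul_sum, ← Finset.mul_sum, ← hf]
  have h2 : (C (2⁻¹ : ℝ) : RX d) •
      (((2 : RX d) * f) • (1 : Matrix (Fin n) (Fin n) (RX d)) - (2 : RX d) • (Aᵀ * A))
      = f • (1 : Matrix (Fin n) (Fin n) (RX d)) - Aᵀ * A := by
    have hc : (C (2⁻¹ : ℝ) : RX d) * 2 = 1 := by
      rw [← map_ofNat (C : ℝ →+* RX d) 2, ← _root_.map_mul]
      norm_num
    rw [smul_sub, smul_smul, smul_smul, ← mul_assoc, hc, one_mul, one_smul]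
  rw [← h2, ← hkey2]
  exact qm_const_smul h𝓜 (by norm_num) hbig


lemma m0_one_to_two (hA : MatArch 𝓜) :
    ∃ r : ℝ, 0 < r ∧ (C r - ∑ i : Fin d, X i ^ 2 : RX d) ∈ M0 𝓜 := by
  choose k hk using fun i : Fin d => hA ((X i : RX d) • 1)
  have hki : ∀ i : Fin d, ((k i : RX d) - X i ^ 2) ∈ M0 𝓜 := by
    intro i
    have e : (k i : RX d) • (1 : Matrix (Fin n) (Fin n) (RX d))
        - ((X i : RX d) • (1 : Matrix (Fin n) (Fin n) (RX d)))ᵀ * ((X i : RX d) • 1)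
        = ((k i : RX d) - X i ^ 2) • 1 := by
      rw [sub_smul]
      congr 1
      simp [Matrix.transpose_smul, smul_mul_assoc, mul_smul_comm, smul_smul, smul_pow, one_pow, ← sq]
    have h := hk i
    rw [e] at h
    exact h
  refine ⟨(∑ i : Fin d, (k i : ℝ)) + 1, by positivity, ?_⟩
  have hcast : (C ((∑ i : Fin d, (k i : ℝ)) + 1) : RX d)
      = (∑ i : Fin d, (k i : RX d)) + 1 := by
    rw [_root_.map_add, _root_.map_one, map_sum]
    simp only [natCast_eq_C]
  have key : (C ((∑ i : Fin d, (k i : ℝ)) + 1) - ∑ i : Fin d, X i ^ 2 : RX d)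
      = (∑ i : Fin d, ((k i : RX d) - X i ^ 2)) + 1 := by
    rw [hcast, Finset.sum_sub_distrib]
    ring
  rw [key]
  exact m0_add h𝓜 (m0_sum h𝓜 _ _ fun i _ => hki i) (m0_one h𝓜)

end auxQM

/-- Archimedean criterion for quadratic modules of polynomial matrices:
(1) `𝓜` Archimedean ⟺ (2) `(r − Σ x_i²)·I_n ∈ 𝓜` for some `r > 0`
⟺ (3) `(r ± x_i)·I_n ∈ 𝓜` for some `r > 0` and all `i`. -/
theorem stmt_10 {d n : ℕ} (hn : 0 < n) (𝓜 : Set (Matrix (Fin n) (Fin n) (RX d)))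
    (h𝓜 : IsMatQuadModule 𝓜) :
    (MatArch 𝓜 ↔ ∃ r : ℝ, 0 < r ∧
        (MvPolynomial.C r - ∑ i : Fin d, MvPolynomial.X i ^ 2) •
          (1 : Matrix (Fin n) (Fin n) (RX d)) ∈ 𝓜) ∧
    ((∃ r : ℝ, 0 < r ∧
        (MvPolynomial.C r - ∑ i : Fin d, MvPolynomial.X i ^ 2) •
          (1 : Matrix (Fin n) (Fin n) (RX d)) ∈ 𝓜) ↔
      ∃ r : ℝ, 0 < r ∧ ∀ i : Fin d,
        (MvPolynomial.C r + MvPolynomial.X i) • (1 : Matrix (Fin n) (Fin n) (RX d)) ∈ 𝓜 ∧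
        (MvPolynomial.C r - MvPolynomial.X i) • (1 : Matrix (Fin n) (Fin n) (RX d)) ∈ 𝓜) := by
  constructor
  · constructor
    · intro hA
      obtain ⟨r, hr, h⟩ := m0_one_to_two h𝓜 hA
      exact ⟨r, hr, h⟩
    · rintro ⟨r, hr, h⟩
      have h' : (MvPolynomial.C r - ∑ i : Fin d, MvPolynomial.X i ^ 2 : RX d) ∈ M0 𝓜 := h
      have hpm := fun i : Fin d => m0_two_to_three h𝓜 hr h' i
      exact arch_of_bd h𝓜 hn (bd_all h𝓜 fun i =>
        bd_X h𝓜 (by linarith : (0:ℝ) < r + 4⁻¹) hpm i)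
  · constructor
    · rintro ⟨r, hr, h⟩
      exact ⟨r + 4⁻¹, by linarith, fun i => m0_two_to_three h𝓜 hr h i⟩
    · rintro ⟨r, hr, h⟩
      exact ⟨(d : ℝ) * r ^ 2 + 1, by positivity, m0_three_to_two h𝓜 hr h⟩

end
end

section
/- Let M be a quadratic module in ℝ[X]. Then M is Archimedean if and only if M^n is an Archimedean quadratic module in M_n(ℝ[X]). -/
open Matrix
noncomputable section

section Aux
variable {R : Type} [CommRing R] {n : ℕ} {M : Set R}

lemma aux_qm_zero (hM : IsQuadModule M) : (0:R) ∈ M := by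
  have := hM.2.2 0 1 hM.1; simpa using this

lemma aux_qm_sum (hM : IsQuadModule M) {ι : Type} (s : Finset ι) (g : ι → R)
    (h : ∀ i ∈ s, g i ∈ M) : ∑ i ∈ s, g i ∈ M :=
  Finset.sum_induction g (· ∈ M) (fun a b ha hb => hM.2.1 a ha b hb) (aux_qm_zero hM) h

lemma mataux_qm_zero : (0 : Matrix (Fin n) (Fin n) R) ∈ MatQM n M :=
  ⟨0, Fin.elim0, Fin.elim0, fun i => i.elim0, by simp⟩

lemma aux_matqm_single {m : R} (hm : m ∈ M) (C : Matrix (Fin n) (Fin n) R) :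
    m • (Cᵀ * C) ∈ MatQM n M :=
  ⟨1, fun _ => m, fun _ => C, fun _ => hm, by simp⟩

lemma aux_matqm_add {X Y : Matrix (Fin n) (Fin n) R} (hX : X ∈ MatQM n M) (hY : Y ∈ MatQM n M) :
    X + Y ∈ MatQM n M := by
  obtain ⟨k1, m1, A1, h1, e1⟩ := hX
  obtain ⟨k2, m2, A2, h2, e2⟩ := hY
  refine ⟨k1 + k2, Fin.addCases m1 m2, Fin.addCases A1 A2, ?_, ?_⟩
  · intro i; refine Fin.addCases (fun j => ?_) (fun j => ?_) i <;> simp [h1, h2]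
  · rw [e1, e2, Fin.sum_univ_add]
    simp

lemma aux_matqm_sum {ι : Type} (s : Finset ι) (g : ι → Matrix (Fin n) (Fin n) R)
    (h : ∀ i ∈ s, g i ∈ MatQM n M) : ∑ i ∈ s, g i ∈ MatQM n M :=
  Finset.sum_induction g (· ∈ MatQM n M) (fun _ _ => aux_matqm_add) mataux_qm_zero h

end Aux

lemma aux_backward {d n : ℕ} (hn : 0 < n) {M : Set (RX d)} (hM : IsQuadModule M)
    (h : MatArch (MatQM n M)) : ScalarArch M := by
  intro f
  obtain ⟨k, t, m, A, hm, hA⟩ := h (f • 1)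
  refine ⟨k, ?_⟩
  set i0 : Fin n := ⟨0, hn⟩
  have hEntry : (k : RX d) - f ^ 2 = ∑ i, m i * ∑ p, A i p i0 * A i p i0 := by
    have h2 := congrFun (congrFun hA i0) i0
    simpa [Matrix.sub_apply, Matrix.smul_apply, Matrix.one_apply, Matrix.mul_apply,
      Matrix.sum_apply, pow_two] using h2
  rw [hEntry]
  refine aux_qm_sum hM _ _ (fun i _ => ?_)
  rw [Finset.mul_sum]
  refine aux_qm_sum hM _ _ (fun p _ => ?_)
  have := hM.2.2 (A i p i0) _ (hm i)
  rw [pow_two] at this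
  simpa [mul_comm, mul_assoc, mul_left_comm] using this

lemma aux_half_mem {d : ℕ} {M : Set (RX d)} (hM : IsQuadModule M) :
    MvPolynomial.C (2⁻¹ : ℝ) ∈ M := by
  have h := hM.2.2 (MvPolynomial.C (Real.sqrt 2⁻¹)) 1 hM.1
  have : (MvPolynomial.C (Real.sqrt 2⁻¹) : RX d) ^ 2 * 1 = MvPolynomial.C (2⁻¹ : ℝ) := by
    rw [mul_one, ← map_pow, Real.sq_sqrt (by norm_num : (0:ℝ) ≤ 2⁻¹)]
  rwa [this] at h

lemma aux_htwo {d : ℕ} (x : RX d) : MvPolynomial.C (2⁻¹ : ℝ) * (2 * x) = x := by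
  have h2 : (2 : RX d) = MvPolynomial.C (2 : ℝ) :=
    (map_ofNat (MvPolynomial.C : ℝ →+* RX d) 2).symm
  rw [← mul_assoc, h2, ← MvPolynomial.C_mul]
  norm_num

lemma aux_forward {d n : ℕ} (hn : 0 < n) {M : Set (RX d)} (hM : IsQuadModule M)
    (hs : ScalarArch M) : MatArch (MatQM n M) := by
  intro A
  choose k hk using hs
  refine ⟨∑ a : Fin n, ∑ b : Fin n, k (A a b), ?_⟩
  set K : ℕ := ∑ a : Fin n, ∑ b : Fin n, k (A a b) with hKdef
  set f : RX d := ∑ a : Fin n, ∑ b : Fin n, (A a b) ^ 2 with hfdef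
  have hKf : (K : RX d) - f ∈ M := by
    have he : ((K : ℕ) : RX d) - f = ∑ a : Fin n, ∑ b : Fin n,
        ((k (A a b) : RX d) - (A a b) ^ 2) := by
      simp [hKdef, hfdef, Finset.sum_sub_distrib, Nat.cast_sum]
    rw [he]
    exact aux_qm_sum hM _ _ fun a _ => aux_qm_sum hM _ _ fun b _ => hk _
  set i0 : Fin n := ⟨0, hn⟩
  set D : Fin n × Fin n × Fin n → Matrix (Fin n) (Fin n) (RX d) :=
    fun t => Matrix.of fun p q =>
      if p = i0 then A t.1 t.2.1 * (if t.2.2 = q then 1 else 0)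
        - A t.1 t.2.2 * (if t.2.1 = q then 1 else 0) else 0 with hDdef
  have key : ∀ (a : Fin n) (b b' : Fin n),
      ∑ i : Fin n, ∑ j : Fin n,
        ((A a i * (if j = b then 1 else 0) - A a j * (if i = b then 1 else 0)) *
         (A a i * (if j = b' then 1 else 0) - A a j * (if i = b' then 1 else 0)))
      = 2 * ((if b = b' then 1 else 0) * ∑ i, A a i ^ 2 - A a b * A a b') := by
    intro a b b'
    by_cases h : b = b'
    · subst h
      simp [sub_mul, mul_sub, ite_mul, mul_ite, Finset.sum_sub_distrib,
        Finset.sum_ite_eq, Finset.sum_ite_eq', pow_two]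
      ring
    · simp only [sub_mul, mul_sub, ite_mul, mul_ite, mul_zero, zero_mul, mul_one, one_mul,
        Finset.sum_sub_distrib, Finset.sum_ite_eq, Finset.sum_ite_eq', Finset.mem_univ,
        if_true, pow_two, Finset.mul_sum, h, Ne.symm h, if_neg, if_false]
      simp [h, Ne.symm h]
      ring
  have hsum : ∑ t : Fin n × Fin n × Fin n, (MvPolynomial.C (2⁻¹ : ℝ) : RX d) • ((D t)ᵀ * (D t))
      = f • (1 : Matrix (Fin n) (Fin n) (RX d)) - Aᵀ * A := by
    rw [← Matrix.ext_iff]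
    intro b b'
    simp only [Matrix.sum_apply, Matrix.smul_apply, Matrix.mul_apply, Matrix.sub_apply,
      Matrix.one_apply, Matrix.transpose_apply, smul_eq_mul, hDdef, Matrix.of_apply]
    rw [Fintype.sum_prod_type]
    simp only [Fintype.sum_prod_type]
    have hp : ∀ (u w : RX d), ∑ p : Fin n,
        (if p = i0 then u else 0) * (if p = i0 then w else 0) = u * w := by
      intro u w; simp [ite_mul, Finset.sum_ite_eq']
    simp_rw [hp]
    simp_rw [← Finset.mul_sum]
    simp_rw [key]
    rw [← Finset.mul_sum, aux_htwo, Finset.sum_sub_distrib, ← Finset.mul_sum, hfdef]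
    ring
  have hrepr : (K : RX d) • (1 : Matrix (Fin n) (Fin n) (RX d)) - Aᵀ * A
      = ((K : RX d) - f) • ((1 : Matrix (Fin n) (Fin n) (RX d))ᵀ * 1)
        + ∑ t : Fin n × Fin n × Fin n, (MvPolynomial.C (2⁻¹ : ℝ) : RX d) • ((D t)ᵀ * (D t)) := by
    rw [hsum]
    simp [sub_smul]
  rw [hrepr]
  exact aux_matqm_add (aux_matqm_single hKf _)
    (aux_matqm_sum _ _ fun t _ => aux_matqm_single (aux_half_mem hM) _)


/-- A quadratic module `M` of `ℝ[X]` is Archimedean iff `M^n` is an Archimedean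
quadratic module of `M_n(ℝ[X])`. -/
theorem stmt_11 {d n : ℕ} (hn : 0 < n) (M : Set (RX d)) (hM : IsQuadModule M) :
    ScalarArch M ↔ MatArch (MatQM n M) :=
  ⟨fun hs => aux_forward hn hM hs, fun h => aux_backward hn hM h⟩

end
end
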